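/- The 6-dimensional simplified shuffle-cube SSQ_6 is vertex-pancyclic: for every vertex u of SSQ_6 and every integer l with 3 ≤ l ≤ 32, there is a cycle of length l in SSQ_6 passing through u. -/

import Mathlib

/-- Vertices of the `n`-dimensional simplified shuffle-cube: binary strings of
length `n` (encoded as functions `ℕ → Bool` vanishing from position `n` on)
such that for every `j` with `1 ≤ j ≤ (n-2)/4` the bits in positions
`4j+1` and `4j` are equal. -/
def SSQVertex (n : ℕ) : Type :=
  {u : ℕ → Bool // (∀ i, n ≤ i → u i = false) ∧
    ∀ j, 1 ≤ j → j ≤ (n - 2) / 4 → u (4 * j + 1) = u (4 * j)}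

/-- The set `V₀₀` = {1111, 0001, 0010, 0011} of 4-bit patterns
(most significant bit first). -/
def V00 : Set (Bool × Bool × Bool × Bool) :=
  {(true, true, true, true), (false, false, false, true),
   (false, false, true, false), (false, false, true, true)}

/-- The adjacency condition of the simplified shuffle-cube: either the two
strings agree everywhere except in exactly one of the bits in positions `1`
and `0`, or there is a `j` with `1 ≤ j ≤ (n-2)/4` such that the strings agree
outside the positions `4j-2, …, 4j+1` and the bitwise XOR of the `j`-th 4-bit
blocks lies in `V₀₀`. -/
def ssqRel (n : ℕ) (u v : ℕ → Bool) : Prop :=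
  ((∀ i, 2 ≤ i → u i = v i) ∧ ((u 0 = v 0) ↔ ¬ (u 1 = v 1))) ∨
  (∃ j, 1 ≤ j ∧ j ≤ (n - 2) / 4 ∧
    (∀ i, (i < 4 * j - 2 ∨ 4 * j + 1 < i) → u i = v i) ∧
    (xor (u (4 * j + 1)) (v (4 * j + 1)), xor (u (4 * j)) (v (4 * j)),
     xor (u (4 * j - 1)) (v (4 * j - 1)), xor (u (4 * j - 2)) (v (4 * j - 2))) ∈ V00)

/-- The `n`-dimensional simplified shuffle-cube `SSQ_n`. -/
def SSQ (n : ℕ) : SimpleGraph (SSQVertex n) :=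
  SimpleGraph.fromRel (fun u v => ssqRel n u.1 v.1)

/-! ### Auxiliary machinery for `SSQ 6` -/

/-- Abbreviation for 5-tuples of bits `(a, b3, b2, b1, b0)` encoding a vertex
of `SSQ 6` (bit `a` is the common value of positions 4 and 5). -/
abbrev SB := Bool × Bool × Bool × Bool × Bool

/-- The string associated to a 5-tuple of bits. -/
def mkf (s : SB) : ℕ → Bool := fun i =>
  match i with
  | 0 => s.2.2.2.2
  | 1 => s.2.2.2.1
  | 2 => s.2.2.1
  | 3 => s.2.1
  | 4 => s.1
  | 5 => s.1
  | _ + 6 => false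

/-- The vertex of `SSQ 6` associated to a 5-tuple of bits. -/
def mkv (s : SB) : SSQVertex 6 :=
  ⟨mkf s, by
    constructor
    · intro i hi
      obtain ⟨n, rfl⟩ : ∃ n, i = n + 6 := ⟨i - 6, by omega⟩
      rfl
    · intro j h1 h2
      interval_cases j
      rfl⟩

/-- The six generators of `SSQ 6` acting on bit 5-tuples. -/
def step : Fin 6 → SB → SB
  | 0, (a, b3, b2, b1, b0) => (a, b3, b2, b1, !b0)
  | 1, (a, b3, b2, b1, b0) => (a, b3, b2, !b1, b0)
  | 2, (a, b3, b2, b1, b0) => (a, b3, !b2, b1, b0)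
  | 3, (a, b3, b2, b1, b0) => (a, !b3, b2, b1, b0)
  | 4, (a, b3, b2, b1, b0) => (a, !b3, !b2, b1, b0)
  | 5, (a, b3, b2, b1, b0) => (!a, !b3, !b2, b1, b0)

lemma adj_step (g : Fin 6) (s : SB) : (SSQ 6).Adj (mkv s) (mkv (step g s)) := by
  obtain ⟨a, b3, b2, b1, b0⟩ := s
  rw [SSQ, SimpleGraph.fromRel_adj]
  fin_cases g
  · refine ⟨fun h => ?_, Or.inl (Or.inl ⟨fun i hi => ?_, ?_⟩)⟩
    · have := congrFun (congrArg Subtype.val h) 0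
      simp [mkv, mkf, step] at this
    · rcases i with _ | _ | _ | _ | _ | _ | i <;> first | omega | rfl
    · show (b0 = !b0) ↔ ¬(b1 = b1)
      cases b0 <;> cases b1 <;> decide
  · refine ⟨fun h => ?_, Or.inl (Or.inl ⟨fun i hi => ?_, ?_⟩)⟩
    · have := congrFun (congrArg Subtype.val h) 1
      simp [mkv, mkf, step] at this
    · rcases i with _ | _ | _ | _ | _ | _ | i <;> first | omega | rfl
    · show (b0 = b0) ↔ ¬(b1 = !b1)
      cases b0 <;> cases b1 <;> decide
  · refine ⟨fun h => ?_, Or.inl (Or.inr ⟨1, le_refl 1, by norm_num,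
      fun i hi => ?_, ?_⟩)⟩
    · have := congrFun (congrArg Subtype.val h) 2
      simp [mkv, mkf, step] at this
    · rcases i with _ | _ | _ | _ | _ | _ | i <;> first | rfl | omega
    · show (xor a a, xor a a, xor b3 b3, xor b2 (!b2)) ∈ V00
      have : (xor a a, xor a a, xor b3 b3, xor b2 (!b2))
          = ((false, false, false, true) : Bool × Bool × Bool × Bool) := by
        cases a <;> cases b3 <;> cases b2 <;> rfl
      rw [this]; simp [V00]
  · refine ⟨fun h => ?_, Or.inl (Or.inr ⟨1, le_refl 1, by norm_num,
      fun i hi => ?_, ?_⟩)⟩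
    · have := congrFun (congrArg Subtype.val h) 3
      simp [mkv, mkf, step] at this
    · rcases i with _ | _ | _ | _ | _ | _ | i <;> first | rfl | omega
    · show (xor a a, xor a a, xor b3 (!b3), xor b2 b2) ∈ V00
      have : (xor a a, xor a a, xor b3 (!b3), xor b2 b2)
          = ((false, false, true, false) : Bool × Bool × Bool × Bool) := by
        cases a <;> cases b3 <;> cases b2 <;> rfl
      rw [this]; simp [V00]
  · refine ⟨fun h => ?_, Or.inl (Or.inr ⟨1, le_refl 1, by norm_num,
      fun i hi => ?_, ?_⟩)⟩
    · have := congrFun (congrArg Subtype.val h) 2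
      simp [mkv, mkf, step] at this
    · rcases i with _ | _ | _ | _ | _ | _ | i <;> first | rfl | omega
    · show (xor a a, xor a a, xor b3 (!b3), xor b2 (!b2)) ∈ V00
      have : (xor a a, xor a a, xor b3 (!b3), xor b2 (!b2))
          = ((false, false, true, true) : Bool × Bool × Bool × Bool) := by
        cases a <;> cases b3 <;> cases b2 <;> rfl
      rw [this]; simp [V00]
  · refine ⟨fun h => ?_, Or.inl (Or.inr ⟨1, le_refl 1, by norm_num,
      fun i hi => ?_, ?_⟩)⟩
    · have := congrFun (congrArg Subtype.val h) 2
      simp [mkv, mkf, step] at this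
    · rcases i with _ | _ | _ | _ | _ | _ | i <;> first | rfl | omega
    · show (xor a (!a), xor a (!a), xor b3 (!b3), xor b2 (!b2)) ∈ V00
      have : (xor a (!a), xor a (!a), xor b3 (!b3), xor b2 (!b2))
          = ((true, true, true, true) : Bool × Bool × Bool × Bool) := by
        cases a <;> cases b3 <;> cases b2 <;> rfl
      rw [this]; simp [V00]

/-- Build the walk in `SSQ 6` determined by a list of generator moves. -/
def walkOf : (s : SB) → (ms : List (Fin 6)) →
    (SSQ 6).Walk (mkv s) (mkv (ms.foldl (fun t g => step g t) s))
  | _, [] => SimpleGraph.Walk.nil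
  | s, g :: ms => SimpleGraph.Walk.cons (adj_step g s) (walkOf (step g s) ms)

/-- The all-zero bit tuple. -/
def zeroS : SB := (false, false, false, false, false)

/-- The all-zero vertex of `SSQ 6`. -/
def zero6 : SSQVertex 6 := mkv zeroS

instance : DecidableEq (SSQVertex 6) := fun u v =>
  decidable_of_iff (∀ i : Fin 6, u.1 i.1 = v.1 i.1) (by
    constructor
    · intro h
      refine Subtype.ext (funext fun i => ?_)
      by_cases hi : i < 6
      · exact h ⟨i, hi⟩
      · rw [u.2.1 i (by omega), v.2.1 i (by omega)]
    · intro h i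
      rw [h])

/-- The walk from the zero vertex given by a list of moves whose endpoint
returns to zero. -/
def cyc (ms : List (Fin 6)) (h : ms.foldl (fun t g => step g t) zeroS = zeroS) :
    (SSQ 6).Walk zero6 zero6 :=
  (walkOf zeroS ms).copy rfl (congrArg mkv h)

lemma isCycle_iff' {V : Type*} {G : SimpleGraph V} {u : V} (p : G.Walk u u) :
    p.IsCycle ↔ p.edges.Nodup ∧ p.length ≠ 0 ∧ p.support.tail.Nodup := by
  rw [SimpleGraph.Walk.isCycle_def, SimpleGraph.Walk.isTrail_def]
  constructor
  · rintro ⟨h1, h2, h3⟩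
    refine ⟨h1, fun hl => h2 ?_, h3⟩
    exact (SimpleGraph.Walk.nil_iff_eq_nil).1
      ((SimpleGraph.Walk.nil_iff_length_eq).2 hl)
  · rintro ⟨h1, h2, h3⟩
    refine ⟨h1, fun hn => h2 ?_, h3⟩
    subst hn; rfl

/-- Pointwise `xor` with a fixed vertex. -/
def xorv (w : SSQVertex 6) (v : SSQVertex 6) : SSQVertex 6 :=
  ⟨fun i => xor (w.1 i) (v.1 i), by
    constructor
    · intro i hi
      show xor (w.1 i) (v.1 i) = false
      rw [w.2.1 i hi, v.2.1 i hi]; rfl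
    · intro j h1 h2
      show xor (w.1 (4*j+1)) (v.1 (4*j+1)) = xor (w.1 (4*j)) (v.1 (4*j))
      rw [w.2.2 j h1 h2, v.2.2 j h1 h2]⟩

lemma xor_cancel_iff (a b c : Bool) : (xor a b = xor a c) ↔ (b = c) := by
  cases a <;> cases b <;> cases c <;> decide

lemma xor_xor_xor (a b c : Bool) : xor (xor a b) (xor a c) = xor b c := by
  cases a <;> cases b <;> cases c <;> decide

lemma ssqRel_xor (w x y : SSQVertex 6) (h : ssqRel 6 x.1 y.1) :
    ssqRel 6 (xorv w x).1 (xorv w y).1 := by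
  rcases h with ⟨h1, h2⟩ | ⟨j, hj1, hj2, h3, h4⟩
  · left
    constructor
    · intro i hi
      show xor (w.1 i) (x.1 i) = xor (w.1 i) (y.1 i)
      rw [xor_cancel_iff]; exact h1 i hi
    · show (xor (w.1 0) (x.1 0) = xor (w.1 0) (y.1 0)) ↔
        ¬(xor (w.1 1) (x.1 1) = xor (w.1 1) (y.1 1))
      rw [xor_cancel_iff, xor_cancel_iff]; exact h2
  · right
    refine ⟨j, hj1, hj2, fun i hi => ?_, ?_⟩
    · show xor (w.1 i) (x.1 i) = xor (w.1 i) (y.1 i)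
      rw [xor_cancel_iff]; exact h3 i hi
    · show (xor (xor (w.1 (4*j+1)) (x.1 (4*j+1))) (xor (w.1 (4*j+1)) (y.1 (4*j+1))),
        xor (xor (w.1 (4*j)) (x.1 (4*j))) (xor (w.1 (4*j)) (y.1 (4*j))),
        xor (xor (w.1 (4*j-1)) (x.1 (4*j-1))) (xor (w.1 (4*j-1)) (y.1 (4*j-1))),
        xor (xor (w.1 (4*j-2)) (x.1 (4*j-2))) (xor (w.1 (4*j-2)) (y.1 (4*j-2)))) ∈ V00
      simp only [xor_xor_xor]
      exact h4

lemma xorv_injective (w : SSQVertex 6) : Function.Injective (xorv w) := by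
  intro x y h
  refine Subtype.ext (funext fun i => ?_)
  have := congrFun (congrArg Subtype.val h) i
  exact (xor_cancel_iff (w.1 i) (x.1 i) (y.1 i)).1 this

/-- Translation by `w` as a graph homomorphism of `SSQ 6`. -/
def xorHom (w : SSQVertex 6) : SSQ 6 →g SSQ 6 where
  toFun := xorv w
  map_rel' := by
    intro x y h
    rw [SSQ, SimpleGraph.fromRel_adj] at h ⊢
    obtain ⟨hne, hr⟩ := h
    refine ⟨fun hc => hne (xorv_injective w hc), ?_⟩
    rcases hr with h | h
    · exact Or.inl (ssqRel_xor w x y h)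
    · exact Or.inr (ssqRel_xor w y x h)

lemma xorHom_zero (w : SSQVertex 6) : xorv w zero6 = w := by
  refine Subtype.ext (funext fun i => ?_)
  show xor (w.1 i) (mkf zeroS i) = w.1 i
  have : mkf zeroS i = false := by
    rcases i with _ | _ | _ | _ | _ | _ | i <;> rfl
  rw [this, Bool.xor_false]

lemma transport (u : SSQVertex 6) (w : (SSQ 6).Walk zero6 zero6)
    (hc : w.IsCycle) :
    ∃ c : (SSQ 6).Walk u u, c.IsCycle ∧ c.length = w.length := by
  have hz : xorHom u zero6 = u := xorHom_zero u
  refine ⟨((w.map (xorHom u)).copy hz hz), ?_, ?_⟩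
  · rw [SimpleGraph.Walk.isCycle_copy]
    exact hc.map (xorv_injective u)
  · rw [SimpleGraph.Walk.length_copy, SimpleGraph.Walk.length_map]

lemma transport' (u : SSQVertex 6) {l : ℕ} (ms : List (Fin 6))
    (h : ms.foldl (fun t g => step g t) zeroS = zeroS)
    (hc : (cyc ms h).edges.Nodup ∧ (cyc ms h).length ≠ 0 ∧
      (cyc ms h).support.tail.Nodup) (hl : (cyc ms h).length = l) :
    ∃ c : (SSQ 6).Walk u u, c.IsCycle ∧ c.length = l := by
  obtain ⟨c, h1, h2⟩ := transport u (cyc ms h) ((isCycle_iff' _).2 hc)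
  exact ⟨c, h1, h2.trans hl⟩

/-- The simplified shuffle-cube `SSQ₆` is vertex-pancyclic: every vertex lies
on a cycle of every length `l` with `3 ≤ l ≤ 32`. -/
theorem ssq6_vertexPancyclic (u : SSQVertex 6) (l : ℕ) (hl : 3 ≤ l)
    (hl' : l ≤ 32) :
    ∃ c : (SSQ 6).Walk u u, c.IsCycle ∧ c.length = l := by
  interval_cases l
  · exact transport' u [2, 3, 4] (by decide) (by decide) (by decide)
  · exact transport' u [0, 1, 0, 1] (by decide) (by decide) (by decide)
  · exact transport' u [0, 2, 0, 3, 4] (by decide) (by decide) (by decide)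
  · exact transport' u [0, 1, 0, 2, 1, 2] (by decide) (by decide) (by decide)
  · exact transport' u [0, 1, 0, 2, 1, 3, 4] (by decide) (by decide) (by decide)
  · exact transport' u [0, 1, 0, 2, 0, 1, 0, 2] (by decide) (by decide) (by decide)
  · exact transport' u [0, 1, 0, 2, 0, 1, 0, 3, 4] (by decide) (by decide) (by decide)
  · exact transport' u [0, 1, 0, 2, 0, 1, 0, 3, 2, 3] (by decide) (by decide) (by decide)
  · exact transport' u [0, 1, 0, 2, 0, 1, 0, 3, 5, 4, 5] (by decide) (by decide) (by decide)
  · exact transport' u [0, 1, 0, 2, 0, 1, 0, 3, 0, 2, 0, 3] (by decide) (by decide) (by decide)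
  · exact transport' u [0, 1, 0, 2, 0, 1, 0, 3, 0, 5, 0, 4, 5] (by decide) (by decide) (by decide)
  · exact transport' u [0, 1, 0, 2, 0, 1, 0, 3, 0, 1, 0, 2, 1, 3] (by decide) (by decide) (by decide)
  · exact transport' u [0, 1, 0, 2, 0, 1, 0, 3, 0, 1, 0, 5, 1, 4, 5] (by decide) (by decide) (by decide)
  · exact transport' u [0, 1, 0, 2, 0, 1, 0, 3, 0, 1, 0, 2, 0, 1, 0, 3] (by decide) (by decide) (by decide)
  · exact transport' u [0, 1, 0, 2, 0, 1, 0, 3, 0, 1, 0, 2, 1, 5, 2, 4, 5] (by decide) (by decide) (by decide)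
  · exact transport' u [0, 1, 0, 2, 0, 1, 0, 3, 0, 1, 0, 2, 0, 1, 0, 5, 3, 5] (by decide) (by decide) (by decide)
  · exact transport' u [0, 1, 0, 2, 0, 1, 0, 3, 0, 1, 0, 2, 0, 1, 0, 5, 2, 4, 5] (by decide) (by decide) (by decide)
  · exact transport' u [0, 1, 0, 2, 0, 1, 0, 3, 0, 1, 0, 2, 0, 1, 0, 5, 0, 3, 0, 5] (by decide) (by decide) (by decide)
  · exact transport' u [0, 1, 0, 2, 0, 1, 0, 3, 0, 1, 0, 2, 0, 1, 0, 5, 0, 2, 0, 4, 5] (by decide) (by decide) (by decide)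
  · exact transport' u [0, 1, 0, 2, 0, 1, 0, 3, 0, 1, 0, 2, 0, 1, 0, 5, 0, 1, 0, 3, 1, 5] (by decide) (by decide) (by decide)
  · exact transport' u [0, 1, 0, 2, 0, 1, 0, 3, 0, 1, 0, 2, 0, 1, 0, 5, 0, 1, 0, 2, 1, 4, 5] (by decide) (by decide) (by decide)
  · exact transport' u [0, 1, 0, 2, 0, 1, 0, 3, 0, 1, 0, 2, 0, 1, 0, 5, 0, 1, 0, 2, 1, 3, 2, 5] (by decide) (by decide) (by decide)
  · exact transport' u [0, 1, 0, 2, 0, 1, 0, 3, 0, 1, 0, 2, 0, 1, 0, 5, 0, 1, 0, 2, 0, 1, 0, 4, 5] (by decide) (by decide) (by decide)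
  · exact transport' u [0, 1, 0, 2, 0, 1, 0, 3, 0, 1, 0, 2, 0, 1, 0, 5, 0, 1, 0, 2, 0, 1, 0, 3, 2, 5] (by decide) (by decide) (by decide)
  · exact transport' u [0, 1, 0, 2, 0, 1, 0, 3, 0, 1, 0, 2, 0, 1, 0, 5, 0, 1, 0, 2, 0, 1, 3, 0, 3, 4, 5] (by decide) (by decide) (by decide)
  · exact transport' u [0, 1, 0, 2, 0, 1, 0, 3, 0, 1, 0, 2, 0, 1, 0, 5, 0, 1, 0, 2, 0, 1, 0, 3, 0, 2, 0, 5] (by decide) (by decide) (by decide)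
  · exact transport' u [0, 1, 0, 2, 0, 1, 0, 3, 0, 1, 0, 2, 0, 1, 0, 5, 0, 1, 0, 2, 0, 1, 3, 1, 0, 1, 3, 4, 5] (by decide) (by decide) (by decide)
  · exact transport' u [0, 1, 0, 2, 0, 1, 0, 3, 0, 1, 0, 2, 0, 1, 0, 5, 0, 1, 0, 2, 0, 1, 0, 3, 0, 1, 0, 2, 1, 5] (by decide) (by decide) (by decide)
  · exact transport' u [0, 1, 0, 2, 0, 1, 0, 3, 0, 1, 0, 2, 0, 1, 0, 5, 0, 1, 0, 2, 0, 1, 3, 1, 2, 0, 2, 1, 3, 4, 5] (by decide) (by decide) (by decide)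
  · exact transport' u [0, 1, 0, 2, 0, 1, 0, 3, 0, 1, 0, 2, 0, 1, 0, 5, 0, 1, 0, 2, 0, 1, 0, 3, 0, 1, 0, 2, 0, 1, 0, 5] (by decide) (by decide) (by decide)
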